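/- Let R be a finite commutative symmetric ℤ/n-algebra (admitting a ℤ/n-linear functional with kernel containing no nonzero ideal) and let f ∈ R[x] be a monic polynomial of positive degree. Then R[x]/(f) is also a finite symmetric ℤ/n-algebra. -/

import Mathlib

open Polynomial AdjoinRoot

/-- If `R` is a finite symmetric `ℤ/n`-algebra and `f ∈ R[x]` is monic of positive degree,
then `R[x]/(f)` is a finite symmetric `ℤ/n`-algebra. -/
theorem stmt_13 {n : ℕ} {R : Type*} [CommRing R] [Finite R] [Algebra (ZMod n) R]
    (ψ : R →ₗ[ZMod n] ZMod n)
    (hψ : ∀ I : Ideal R, (∀ a ∈ I, ψ a = 0) → I = ⊥)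
    (f : Polynomial R) (hf : f.Monic) (hdeg : 0 < f.natDegree) :
    Finite (Polynomial R ⧸ Ideal.span ({f} : Set (Polynomial R))) ∧
      ∃ ψ' : (Polynomial R ⧸ Ideal.span ({f} : Set (Polynomial R))) →ₗ[ZMod n] ZMod n,
        ∀ I : Ideal (Polynomial R ⧸ Ideal.span ({f} : Set (Polynomial R))),
          (∀ a ∈ I, ψ' a = 0) → I = ⊥ := by
  rcases subsingleton_or_nontrivial R with hR | hR
  · have : Subsingleton (Polynomial R ⧸ Ideal.span ({f} : Set (Polynomial R))) :=
      Function.Surjective.subsingleton Ideal.Quotient.mk_surjective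
    exact ⟨Finite.of_subsingleton, 0, fun I _ => Subsingleton.elim _ _⟩
  have hm : f.natDegree = f.natDegree := rfl
  set m := f.natDegree with hmdef
  have hfd : f.degree = (m : WithBot ℕ) := Polynomial.degree_eq_natDegree hf.ne_zero
  -- Finiteness via the power basis
  have b : PowerBasis R (AdjoinRoot f) := AdjoinRoot.powerBasis' hf
  have hfin : Finite (AdjoinRoot f) :=
    Finite.of_equiv _ (b.basis.repr.toEquiv.trans Finsupp.equivFunOnFinite).symm
  refine ⟨hfin, ?_⟩
  refine ⟨ψ.comp (((Polynomial.lcoeff R (m - 1)).comp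
      (AdjoinRoot.modByMonicHom hf)).restrictScalars (ZMod n)), ?_⟩
  intro I hI
  rw [eq_bot_iff]
  intro a ha
  rw [Submodule.mem_bot]
  obtain ⟨p, rfl⟩ := AdjoinRoot.mk_surjective (g := f) a
  have hrep : AdjoinRoot.mk f (p %ₘ f) = AdjoinRoot.mk f p := by
    rw [Polynomial.modByMonic_eq_sub_mul_div _ f, map_sub, map_mul,
      AdjoinRoot.mk_self, zero_mul, sub_zero]
  set g : Polynomial R := p %ₘ f with hg
  suffices hgz : g = 0 by rw [← hrep, hgz, map_zero]; rfl
  have hdegg : g.degree < f.degree := Polynomial.degree_modByMonic_lt p hf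
  -- key: all coefficients vanish, by downward induction
  have key : ∀ j k : ℕ, m ≤ k + j → g.coeff k = 0 := by
    intro j
    induction j with
    | zero =>
      intro k hk
      apply Polynomial.coeff_eq_zero_of_degree_lt
      refine lt_of_lt_of_le hdegg ?_
      rw [hfd]
      exact_mod_cast (show m ≤ k by omega)
    | succ j ih =>
      intro k hk
      by_cases h : m ≤ k + j
      · exact ih k h
      have hkj : k + j = m - 1 := by omega
      have hr : ∀ r : R, ψ (r * g.coeff k) = 0 := by
        intro r
        have hdeg' : (Polynomial.C r * g * Polynomial.X ^ j).degree < f.degree := by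
          rw [hfd, Polynomial.degree_lt_iff_coeff_zero]
          intro t ht
          have htm : m ≤ t := by exact_mod_cast ht
          rw [Polynomial.coeff_mul_X_pow']
          split_ifs with hjt
          · rw [Polynomial.coeff_C_mul, ih (t - j) (by omega), mul_zero]
          · rfl
        have hmem : AdjoinRoot.mk f (Polynomial.C r * g * Polynomial.X ^ j) ∈ I := by
          have heq : AdjoinRoot.mk f (Polynomial.C r * g * Polynomial.X ^ j) =
              AdjoinRoot.mk f (Polynomial.C r * Polynomial.X ^ j) * AdjoinRoot.mk f p := by
            rw [← hrep, ← map_mul]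
            congr 1
            ring
          rw [heq]
          exact I.mul_mem_left _ ha
        have hz := hI _ hmem
        have hz' : ψ (((Polynomial.C r * g * Polynomial.X ^ j) %ₘ f).coeff (m - 1)) = 0 := hz
        rw [(Polynomial.modByMonic_eq_self_iff hf).mpr hdeg',
          Polynomial.coeff_mul_X_pow', if_pos (show j ≤ m - 1 by omega),
          Polynomial.coeff_C_mul] at hz'
        rwa [show m - 1 - j = k by omega] at hz'
      have hspan : Ideal.span {g.coeff k} = ⊥ := by
        apply hψ
        intro x hx
        obtain ⟨r, hrx⟩ := Ideal.mem_span_singleton'.mp hx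
        rw [← hrx]; exact hr r
      exact Ideal.span_singleton_eq_bot.mp hspan
  ext k
  rw [Polynomial.coeff_zero]
  exact key m k (by omega)
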